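/- In R = ℤ[q,x,y]/(x⁵-1,y⁵-1), with P = x⁴y³ + x³y⁴ + x³y³ + q(x²y² + x²y + xy²) (the character polynomial of H*(C, K_C(1))) and Q' = x²y³ + xy⁴ + x⁴ + x³ + y² + y + q (the character polynomial of H*(C', K_{C'}(2))), the monomials xⁱyʲ not appearing in P·Q' (in any q-degree) are exactly those with (i,j) ∈ {(0,0), (0,3), (0,4), (1,0), (2,0), (3,2), (4,1)}. -/

import Mathlib

open AddMonoidAlgebra Polynomial

/-- The ring `ℤ[q,x,y]/(x⁵-1, y⁵-1)`, realized as the group algebra of `(ℤ/5)²`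
over `ℤ[q]`: a monomial `qᵏ xⁱ yʲ` is `single (i,j) qᵏ`, and the coefficient of
`xⁱ yʲ` (as a polynomial in `q`) is evaluation at `(i,j)`. -/
abbrev RB := AddMonoidAlgebra (Polynomial ℤ) (ZMod 5 × ZMod 5)

/-- `P = [H*(C, K_C(1))] = x⁴y³ + x³y⁴ + x³y³ + q(x²y² + x²y + xy²)`. -/
noncomputable def PB : RB :=
  AddMonoidAlgebra.single (4, 3) 1 + AddMonoidAlgebra.single (3, 4) 1 +
  AddMonoidAlgebra.single (3, 3) 1 + AddMonoidAlgebra.single (2, 2) X +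
  AddMonoidAlgebra.single (2, 1) X + AddMonoidAlgebra.single (1, 2) X

/-- `Q' = [H*(C', K_{C'}(2))] = x²y³ + xy⁴ + x⁴ + x³ + y² + y + q`. -/
noncomputable def Q'B : RB :=
  AddMonoidAlgebra.single (2, 3) 1 + AddMonoidAlgebra.single (1, 4) 1 +
  AddMonoidAlgebra.single (4, 0) 1 + AddMonoidAlgebra.single (3, 0) 1 +
  AddMonoidAlgebra.single (0, 2) 1 + AddMonoidAlgebra.single (0, 1) 1 +
  AddMonoidAlgebra.single (0, 0) X

set_option maxHeartbeats 1000000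

lemma RB.add_apply (f g : RB) (a : ZMod 5 × ZMod 5) : (f + g).coeff a = f.coeff a + g.coeff a := rfl

/-- The monomials `xⁱyʲ` not occurring in `P·Q'` (in any `q`-degree) are exactly
those with `(i,j) ∈ {(0,0),(0,3),(0,4),(1,0),(2,0),(3,2),(4,1)}`; this computes
the acyclic set `A(K(1,2))` on the Beauville surface. -/
theorem stmt_12 (ij : ZMod 5 × ZMod 5) :
    (PB * Q'B).coeff ij = 0 ↔
      ij ∈ ({(0, 0), (0, 3), (0, 4), (1, 0), (2, 0), (3, 2), (4, 1)} :
        Set (ZMod 5 × ZMod 5)) := by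
  obtain ⟨i, j⟩ := ij
  simp only [PB, Q'B, mul_add, add_mul]
  simp only [AddMonoidAlgebra.single_mul_single, one_mul, mul_one, Prod.mk_add_mk]
  fin_cases i <;> fin_cases j <;>
    simp (config := { decide := true }) only [Set.mem_insert_iff, Set.mem_singleton_iff,
      Prod.mk.injEq, RB.add_apply, AddMonoidAlgebra.coeff_single_apply, if_true, if_false,
      add_zero, zero_add, and_true, true_and, and_false, false_and, or_false, false_or,
      or_true, true_or, iff_true, iff_false] <;>
    first
      | rfl
      | (intro h; have h2 := congrArg (Polynomial.eval 1) h; simp at h2)
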